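/- Let r, c, d be positive integers with r ≥ c·d, and let Y_1, …, Y_r be independent real random variables, each taking values in [0,1], such that for every i and every t ∈ [0,1], P[Y_i > t] ≤ β̃·(1−t) (which holds in particular if each Y_i has a density bounded above by β̃). Then P[Y_1 + ⋯ + Y_r ≥ r − c] ≤ 2^r · (β̃/d)^{r − c·d}. -/

import Mathlib

open MeasureTheory ProbabilityTheory

/-- concentration for sums of independent `[0,1]`-valued random variables
whose upper tails satisfy `P[Y_i > t] ≤ β(1-t)`. -/
theorem stmt1 {Ω : Type*} [MeasurableSpace Ω] (μ : Measure Ω) [IsProbabilityMeasure μ]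
    (r c d : ℕ) (hr : 0 < r) (hc : 0 < c) (hd : 0 < d) (hrcd : c * d ≤ r)
    (β : ℝ) (hβ : 0 < β)
    (Y : Fin r → Ω → ℝ)
    (hmeas : ∀ i, Measurable (Y i))
    (hrange : ∀ i ω, Y i ω ∈ Set.Icc (0:ℝ) 1)
    (hindep : iIndepFun Y μ)
    (htail : ∀ i, ∀ t ∈ Set.Icc (0:ℝ) 1,
      μ {ω | t < Y i ω} ≤ ENNReal.ofReal (β * (1 - t))) :
    μ {ω | (r : ℝ) - c ≤ ∑ i, Y i ω} ≤
      ENNReal.ofReal (2 ^ r * (β / d) ^ (r - c * d)) := by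
  classical
  have hd' : (0:ℝ) < d := by exact_mod_cast hd
  set n := r - c * d with hn
  rcases le_or_gt (d:ℝ) β with hβd | hβd
  · -- trivial case: β/d ≥ 1
    have h1 : (1:ℝ) ≤ β / d := (one_le_div hd').2 hβd
    calc μ {ω | (r : ℝ) - c ≤ ∑ i, Y i ω} ≤ 1 := prob_le_one
      _ ≤ ENNReal.ofReal (2 ^ r * (β / d) ^ n) := by
          rw [ENNReal.one_le_ofReal]
          have h2 : (1:ℝ) ≤ (β/d)^n := one_le_pow₀ h1
          have h3 : (1:ℝ) ≤ 2 ^ r := one_le_pow₀ (by norm_num)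
          nlinarith
  · obtain ⟨q, hq⟩ : ∃ q : ℝ, q = β / d := ⟨_, rfl⟩
    have hq0 : 0 ≤ q := by rw [hq]; positivity
    have hq1 : q < 1 := by rw [hq]; exact (div_lt_one hd').2 hβd
    obtain ⟨t, ht⟩ : ∃ t : ℝ, t = 1 - 1 / d := ⟨_, rfl⟩
    have hd1 : (1:ℝ)/d ≤ 1 := by
      rw [div_le_one hd']; exact_mod_cast hd
    have hd2 : (0:ℝ) < 1/d := by positivity
    have ht01 : t ∈ Set.Icc (0:ℝ) 1 := ⟨by rw [ht]; linarith, by rw [ht]; linarith⟩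
    have htail' : ∀ i, μ {ω | t < Y i ω} ≤ ENNReal.ofReal q := by
      intro i
      have h := htail i t ht01
      have he : β * (1 - t) = q := by rw [ht, hq]; ring
      rwa [he] at h
    set F : Finset (Finset (Fin r)) :=
      Finset.univ.powerset.filter (fun S : Finset (Fin r) => S.card ≤ c * d) with hF
    have hsub : {ω | (r:ℝ) - c ≤ ∑ i, Y i ω} ⊆
        ⋃ S ∈ F, ⋂ i ∈ Sᶜ, {ω | t < Y i ω} := by
      intro ω hω
      simp only [Set.mem_setOf_eq] at hω
      set S : Finset (Fin r) := Finset.univ.filter (fun i => Y i ω ≤ t) with hS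
      have hcardr : S.card ≤ r := by
        simpa using Finset.card_le_card (Finset.subset_univ S)
      have hsum1 : ∑ i ∈ S, Y i ω ≤ S.card * t := by
        calc ∑ i ∈ S, Y i ω ≤ ∑ _i ∈ S, t :=
              Finset.sum_le_sum (fun i hi => (Finset.mem_filter.1 hi).2)
          _ = S.card * t := by rw [Finset.sum_const, nsmul_eq_mul]
      have hsum2 : ∑ i ∈ Sᶜ, Y i ω ≤ (Sᶜ.card : ℝ) := by
        calc ∑ i ∈ Sᶜ, Y i ω ≤ ∑ _i ∈ Sᶜ, (1:ℝ) :=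
              Finset.sum_le_sum (fun i _ => (hrange i ω).2)
          _ = (Sᶜ.card : ℝ) := by rw [Finset.sum_const, nsmul_eq_mul, mul_one]
      have hcomp : (Sᶜ.card : ℝ) = r - S.card := by
        rw [Finset.card_compl, Fintype.card_fin, Nat.cast_sub hcardr]
      have htotal : ∑ i, Y i ω = ∑ i ∈ S, Y i ω + ∑ i ∈ Sᶜ, Y i ω :=
        (Finset.sum_add_sum_compl S _).symm
      have hcard : S.card ≤ c * d := by
        have key : (S.card : ℝ) ≤ c * d := by
          have h1 : (r:ℝ) - c ≤ S.card * t + ((r:ℝ) - S.card) := by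
            rw [← hcomp]; linarith [htotal ▸ hω]
          have hkt : (S.card : ℝ) * t = S.card - S.card * (1/d) := by rw [ht]; ring
          have h2 : (S.card : ℝ) * (1/d) ≤ c := by linarith
          calc (S.card : ℝ) = (S.card * (1/d)) * d := by field_simp
            _ ≤ c * d := mul_le_mul_of_nonneg_right h2 (le_of_lt hd')
        exact_mod_cast key
      have hSF : S ∈ F := by simp [hF, hcard]
      refine Set.mem_biUnion hSF ?_
      · simp only [Set.mem_iInter, Set.mem_setOf_eq]
        intro i hi
        have hiS : i ∉ S := by simpa using hi
        simp only [hS, Finset.mem_filter, Finset.mem_univ, true_and, not_le] at hiS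
        exact hiS
    have hA : ∀ S ∈ F, μ (⋂ i ∈ Sᶜ, {ω | t < Y i ω}) ≤ ENNReal.ofReal q ^ n := by
      intro S hSF
      have hScard : S.card ≤ c * d := (Finset.mem_filter.1 hSF).2
      have hprod := (iIndepFun_iff_measure_inter_preimage_eq_mul.1 hindep) Sᶜ
        (sets := fun _ => Set.Ioi t) (fun i _ => measurableSet_Ioi)
      have heq : (⋂ i ∈ Sᶜ, {ω | t < Y i ω}) = ⋂ i ∈ Sᶜ, Y i ⁻¹' Set.Ioi t := rfl
      rw [heq, hprod]
      have hle1 : ENNReal.ofReal q ≤ 1 := by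
        rw [ENNReal.ofReal_le_one]; linarith
      have hnle : n ≤ Sᶜ.card := by
        rw [Finset.card_compl, Fintype.card_fin]
        exact Nat.sub_le_sub_left hScard r
      calc ∏ i ∈ Sᶜ, μ (Y i ⁻¹' Set.Ioi t)
          ≤ ∏ _i ∈ Sᶜ, ENNReal.ofReal q :=
            Finset.prod_le_prod' (fun i _ => htail' i)
        _ = ENNReal.ofReal q ^ Sᶜ.card := by rw [Finset.prod_const]
        _ ≤ ENNReal.ofReal q ^ n := pow_le_pow_right_of_le_one' hle1 hnle
    calc μ {ω | (r : ℝ) - c ≤ ∑ i, Y i ω}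
        ≤ μ (⋃ S ∈ F, ⋂ i ∈ Sᶜ, {ω | t < Y i ω}) := measure_mono hsub
      _ ≤ ∑ S ∈ F, μ (⋂ i ∈ Sᶜ, {ω | t < Y i ω}) := measure_biUnion_finset_le F _
      _ ≤ ∑ _S ∈ F, ENNReal.ofReal q ^ n := Finset.sum_le_sum hA
      _ = (F.card : ENNReal) * ENNReal.ofReal q ^ n := by
          rw [Finset.sum_const, nsmul_eq_mul]
      _ ≤ (2:ENNReal) ^ r * ENNReal.ofReal q ^ n := by
          gcongr
          have h1 : F.card ≤ (Finset.univ : Finset (Fin r)).powerset.card :=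
            Finset.card_filter_le _ _
          have h2 : F.card ≤ 2 ^ r := by
            simpa [Finset.card_powerset] using h1
          exact_mod_cast h2
      _ = ENNReal.ofReal (2 ^ r * (β/d) ^ n) := by
          rw [← hq, ENNReal.ofReal_mul (by positivity), ENNReal.ofReal_pow hq0,
            show ((2:ENNReal) ^ r) = ENNReal.ofReal ((2:ℝ) ^ r) by
              rw [ENNReal.ofReal_pow (by norm_num), ENNReal.ofReal_ofNat]]
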